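/- Let P be a poset and n a positive integer. Then P has dimension n if and only if n is the supremum of the dimensions of all finite (nonempty) subposets of P. -/

import Mathlib

universe u

/-- The order dimension of a poset: the least cardinal `κ` such that the partial
order is the intersection of `κ` linear orderings (each extending it). -/
noncomputable def orderDim (α : Type u) [PartialOrder α] : Cardinal.{u} :=
  sInf {κ : Cardinal.{u} | ∃ (ι : Type u) (r : ι → α → α → Prop),
    (∀ i, IsLinearOrder α (r i)) ∧
    (∀ x y : α, x ≤ y ↔ ∀ i, r i x y) ∧
    Cardinal.mk ι = κ}

open Cardinal Filter

def dimSet (α : Type u) [PartialOrder α] : Set Cardinal.{u} :=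
  {κ | ∃ (ι : Type u) (r : ι → α → α → Prop),
    (∀ i, IsLinearOrder α (r i)) ∧
    (∀ x y : α, x ≤ y ↔ ∀ i, r i x y) ∧
    Cardinal.mk ι = κ}

lemma orderDim_def (α : Type u) [PartialOrder α] : orderDim α = sInf (dimSet α) := rfl

variable {α : Type u} [PartialOrder α]

lemma exists_linext_flip {x y : α} (h : ¬ x ≤ y) :
    ∃ s : α → α → Prop, IsLinearOrder α s ∧ (∀ a b : α, a ≤ b → s a b) ∧ s y x := by
  classical
  set r : α → α → Prop := fun a b => a ≤ b ∨ (a ≤ y ∧ x ≤ b) with hr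
  haveI : IsPartialOrder α r :=
    { refl := fun a => Or.inl le_rfl
      trans := by
        rintro a b c (hab | ⟨hay, hxb⟩) (hbc | ⟨hby, hxc⟩)
        · exact Or.inl (hab.trans hbc)
        · exact Or.inr ⟨hab.trans hby, hxc⟩
        · exact Or.inr ⟨hay, hxb.trans hbc⟩
        · exact absurd (hxb.trans hby) h
      antisymm := by
        rintro a b (hab | ⟨hay, hxb⟩) (hba | ⟨hby, hxa⟩)
        · exact le_antisymm hab hba
        · exact absurd ((hxa.trans hab).trans hby) h
        · exact absurd ((hxb.trans hba).trans hay) h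
        · exact absurd (hxb.trans hby) h }
  obtain ⟨s, hs, hrs⟩ := extend_partialOrder r
  exact ⟨s, hs, fun a b hab => hrs _ _ (Or.inl hab), hrs _ _ (Or.inr ⟨le_rfl, le_rfl⟩)⟩

abbrev LinExt (α : Type u) [PartialOrder α] : Type u :=
  {s : α → α → Prop // IsLinearOrder α s ∧ ∀ a b : α, a ≤ b → s a b}

lemma mk_linExt_mem : (Cardinal.mk (LinExt α)) ∈ dimSet α := by
  refine ⟨LinExt α, fun i => i.1, fun i => i.2.1, ?_, rfl⟩
  intro x y
  constructor
  · intro hxy i; exact i.2.2 _ _ hxy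
  · intro hall
    by_contra hxy
    obtain ⟨s, hs, hext, hsyx⟩ := exists_linext_flip hxy
    haveI := hs
    have hx : s x y := hall ⟨s, hs, hext⟩
    exact hxy (le_of_eq (antisymm hx hsyx))

lemma dimSet_nonempty : (dimSet α).Nonempty := ⟨_, mk_linExt_mem⟩

lemma orderDim_mem : orderDim α ∈ dimSet α := csInf_mem dimSet_nonempty

lemma orderDim_subtype_le (S : Set α) : orderDim ↥S ≤ orderDim α := by
  obtain ⟨ι, r, hlin, hiff, hκ⟩ := orderDim_mem (α := α)
  refine csInf_le' ?_
  refine ⟨ι, fun i a b => r i a.1 b.1, fun i => ?_, fun a b => ?_, hκ⟩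
  · haveI := hlin i
    exact
      { refl := fun a => refl_of (r i) a.1
        trans := fun a b c hab hbc => trans_of (r i) hab hbc
        antisymm := fun a b hab hba => Subtype.ext (antisymm hab hba)
        total := fun a b => total_of (r i) a.1 b.1 }
  · exact (hiff a.1 b.1)

lemma orderDim_le_bound (S : Set α) : orderDim ↥S ≤ Cardinal.mk (Set (α × α)) := by
  refine le_trans (csInf_le' (mk_linExt_mem (α := ↥S))) ?_
  refine Cardinal.mk_le_of_injective
    (f := fun s : LinExt ↥S =>
      ({p : α × α | ∃ (ha : p.1 ∈ S) (hb : p.2 ∈ S), s.1 ⟨p.1, ha⟩ ⟨p.2, hb⟩} : Set (α × α))) ?_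
  intro s t hst
  apply Subtype.ext
  funext a b
  apply propext
  have h2 := Set.ext_iff.mp hst (a.1, b.1)
  constructor
  · intro hab
    obtain ⟨ha, hb, hh⟩ := h2.mp ⟨a.2, b.2, hab⟩
    exact hh
  · intro hab
    obtain ⟨ha, hb, hh⟩ := h2.mpr ⟨a.2, b.2, hab⟩
    exact hh

lemma orderDim_eq_zero_of_subsingleton [Subsingleton α] : orderDim α = 0 := by
  have hmem : (0 : Cardinal.{u}) ∈ dimSet α :=
    ⟨PEmpty, fun i => i.elim, fun i => i.elim,
      fun x y => ⟨fun _ i => i.elim, fun _ => le_of_eq (Subsingleton.elim x y)⟩,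
      Cardinal.mk_eq_zero _⟩
  exact le_antisymm (csInf_le' hmem) zero_le

lemma exists_fin_realizer {n : ℕ} (h : orderDim α ≤ n) :
    ∃ r : Fin n → α → α → Prop,
      (∀ i, IsLinearOrder α (r i)) ∧ (∀ x y : α, x ≤ y ↔ ∀ i, r i x y) := by
  obtain ⟨ι, r, hlin, hiff, hκ⟩ := orderDim_mem (α := α)
  have hι : Cardinal.mk ι ≤ (n : Cardinal.{u}) := hκ.le.trans h
  rcases isEmpty_or_nonempty ι with hE | hN
  · haveI : Subsingleton α :=
      ⟨fun a b => le_antisymm ((hiff a b).mpr fun i => isEmptyElim i)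
        ((hiff b a).mpr fun i => isEmptyElim i)⟩
    refine ⟨fun _ _ _ => True, fun i => ?_, fun x y => ?_⟩
    · exact
        { refl := fun _ => trivial
          trans := fun _ _ _ _ _ => trivial
          antisymm := fun a b _ _ => Subsingleton.elim a b
          total := fun _ _ => Or.inl trivial }
    · exact ⟨fun _ _ => trivial, fun _ => le_of_eq (Subsingleton.elim x y)⟩
  · have hle : Cardinal.mk ι ≤ Cardinal.mk (ULift.{u} (Fin n)) := by
      rwa [Cardinal.mk_uLift, Cardinal.mk_fin, Cardinal.lift_natCast]
    obtain ⟨f⟩ := (Cardinal.le_def _ _).mp hle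
    have hsurj : Function.Surjective (Function.invFun f) := Function.invFun_surjective f.injective
    refine ⟨fun j => r (Function.invFun f (ULift.up j)), fun j => hlin _, fun x y => ?_⟩
    constructor
    · intro hxy j; exact (hiff x y).mp hxy _
    · intro hall
      refine (hiff x y).mpr fun i => ?_
      obtain ⟨u, hu⟩ := hsurj i
      have h3 : r (Function.invFun f u) x y := hall u.down
      rwa [hu] at h3

lemma orderDim_le_of_fin_realizer {n : ℕ} (r : Fin n → α → α → Prop)
    (hlin : ∀ i, IsLinearOrder α (r i)) (hiff : ∀ x y : α, x ≤ y ↔ ∀ i, r i x y) :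
    orderDim α ≤ n := by
  have hmem : (n : Cardinal.{u}) ∈ dimSet α := by
    refine ⟨ULift (Fin n), fun i => r i.down, fun i => hlin i.down, fun x y => ?_, ?_⟩
    · rw [hiff x y]
      exact ⟨fun h i => h i.down, fun h i => h ⟨i⟩⟩
    · rw [Cardinal.mk_uLift, Cardinal.mk_fin, Cardinal.lift_natCast]
  exact csInf_le' hmem

lemma orderDim_le_of_finite_subposets {P : Type u} [PartialOrder P] [Nonempty P] {n : ℕ}
    (h : ∀ S : Set P, S.Finite → S.Nonempty → orderDim ↥S ≤ n) :
    orderDim P ≤ n := by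
  classical
  have hall : ∀ S : Finset P, orderDim ↥(↑S : Set P) ≤ n := by
    intro S
    rcases S.eq_empty_or_nonempty with rfl | hS
    · haveI : Subsingleton ↥((↑(∅ : Finset P)) : Set P) :=
        ⟨fun a => absurd a.2 (by simp)⟩
      rw [orderDim_eq_zero_of_subsingleton]
      exact zero_le
    · exact h _ (S.finite_toSet) (by simpa using hS)
  choose g hg1 hg2 using fun S : Finset P => exists_fin_realizer (hall S)
  haveI : (atTop : Filter (Finset P)).NeBot := atTop_neBot
  set U : Ultrafilter (Finset P) := Ultrafilter.of atTop with hUdef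
  have hbase : ∀ x y : P, {S : Finset P | x ∈ S ∧ y ∈ S} ∈ U := by
    intro x y
    have h1 : {S : Finset P | ({x, y} : Finset P) ≤ S} ∈ (atTop : Filter (Finset P)) :=
      mem_atTop _
    refine mem_of_superset (Ultrafilter.of_le atTop h1) ?_
    intro S hS
    exact ⟨hS (by simp), hS (by simp)⟩
  set T : Fin n → P → P → Set (Finset P) := fun i x y =>
    {S : Finset P | ∃ (hx : x ∈ S) (hy : y ∈ S),
      g S i ⟨x, Finset.mem_coe.mpr hx⟩ ⟨y, Finset.mem_coe.mpr hy⟩} with hTdef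
  set r : Fin n → P → P → Prop := fun i x y => T i x y ∈ U with hrdef
  have hlin : ∀ i, IsLinearOrder P (r i) := by
    intro i
    refine { refl := ?_, trans := ?_, antisymm := ?_, total := ?_ }
    · -- refl
      intro x
      refine mem_of_superset (hbase x x) ?_
      rintro S ⟨hx, -⟩
      haveI := hg1 S i
      exact ⟨hx, hx, refl_of (g S i) _⟩
    · -- trans
      intro x y z hxy hyz
      refine mem_of_superset (inter_mem hxy hyz) ?_
      rintro S ⟨⟨hx, hy, h1⟩, ⟨hy', hz, h2⟩⟩
      haveI := hg1 S i
      exact ⟨hx, hz, trans_of (g S i) h1 h2⟩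
    · -- antisymm
      intro x y hxy hyx
      obtain ⟨S, ⟨hx, hy, h1⟩, ⟨hy', hx', h2⟩⟩ :=
        Filter.nonempty_of_mem (inter_mem hxy hyx)
      haveI := hg1 S i
      have := antisymm h1 h2
      exact congrArg Subtype.val this
    · -- total
      intro x y
      have hun : T i x y ∪ T i y x ∈ U := by
        refine mem_of_superset (hbase x y) ?_
        rintro S ⟨hx, hy⟩
        haveI := hg1 S i
        rcases total_of (g S i) (⟨x, Finset.mem_coe.mpr hx⟩ : ↥(↑S : Set P))
            ⟨y, Finset.mem_coe.mpr hy⟩ with h1 | h1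
        · exact Or.inl ⟨hx, hy, h1⟩
        · exact Or.inr ⟨hy, hx, h1⟩
      exact Ultrafilter.union_mem_iff.mp hun
  have hiff : ∀ x y : P, x ≤ y ↔ ∀ i, r i x y := by
    intro x y
    constructor
    · intro hxy i
      refine mem_of_superset (hbase x y) ?_
      rintro S ⟨hx, hy⟩
      refine ⟨hx, hy, ?_⟩
      have := (hg2 S (⟨x, Finset.mem_coe.mpr hx⟩ : ↥(↑S : Set P))
        ⟨y, Finset.mem_coe.mpr hy⟩).mp hxy
      exact this i
    · intro hall
      by_contra hxy
      have hsub : {S : Finset P | x ∈ S ∧ y ∈ S} ⊆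
          ⋃ i ∈ (Set.univ : Set (Fin n)), {S : Finset P |
            ∃ (hx : x ∈ S) (hy : y ∈ S),
              ¬ g S i ⟨x, Finset.mem_coe.mpr hx⟩ ⟨y, Finset.mem_coe.mpr hy⟩} := by
        rintro S ⟨hx, hy⟩
        have hnle : ¬ ((⟨x, Finset.mem_coe.mpr hx⟩ : ↥(↑S : Set P)) ≤
            ⟨y, Finset.mem_coe.mpr hy⟩) := hxy
        have := (hg2 S _ _).not.mp hnle
        obtain ⟨i, hi⟩ := not_forall.mp this
        exact Set.mem_biUnion (Set.mem_univ i) ⟨hx, hy, hi⟩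
      have hUn : (⋃ i ∈ (Set.univ : Set (Fin n)), {S : Finset P |
            ∃ (hx : x ∈ S) (hy : y ∈ S),
              ¬ g S i ⟨x, Finset.mem_coe.mpr hx⟩ ⟨y, Finset.mem_coe.mpr hy⟩}) ∈ U :=
        mem_of_superset (hbase x y) hsub
      obtain ⟨i, -, hi⟩ :=
        (Ultrafilter.finite_biUnion_mem_iff (Set.finite_univ)).mp hUn
      obtain ⟨S, ⟨hx, hy, h1⟩, ⟨hx', hy', h2⟩⟩ :=
        Filter.nonempty_of_mem (inter_mem (hall i) hi)
      exact h2 h1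
  exact orderDim_le_of_fin_realizer r hlin hiff

theorem stmt18 (P : Type u) [PartialOrder P] [Nonempty P] (n : ℕ) (hn : 0 < n) :
    orderDim P = n ↔
      (n : Cardinal) =
        sSup {c : Cardinal | ∃ S : Set P, S.Finite ∧ S.Nonempty ∧ orderDim ↥S = c} := by
  classical
  set D : Set Cardinal.{u} :=
    {c : Cardinal | ∃ S : Set P, S.Finite ∧ S.Nonempty ∧ orderDim ↥S = c} with hDdef
  have hDne : D.Nonempty := by
    obtain ⟨x⟩ := ‹Nonempty P›
    exact ⟨orderDim ↥({x} : Set P), {x}, Set.finite_singleton x, Set.singleton_nonempty x, rfl⟩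
  have hbdd : BddAbove D := by
    refine ⟨Cardinal.mk (Set (P × P)), ?_⟩
    rintro c ⟨S, -, -, hc⟩
    exact hc ▸ orderDim_le_bound S
  have hmono : ∀ c ∈ D, c ≤ orderDim P := by
    rintro c ⟨S, -, -, hc⟩
    exact hc ▸ orderDim_subtype_le S
  constructor
  · intro hdim
    have hub : sSup D ≤ (n : Cardinal) :=
      csSup_le hDne fun c hc => hdim ▸ hmono c hc
    rcases eq_or_lt_of_le hub with heq | hlt
    · exact heq.symm
    · exfalso
      have hfin : sSup D < ℵ₀ := hlt.trans (Cardinal.nat_lt_aleph0 n)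
      obtain ⟨m, hm⟩ := Cardinal.lt_aleph0.mp hfin
      have hcomp : orderDim P ≤ m := by
        refine orderDim_le_of_finite_subposets fun S hf hne => ?_
        exact (le_csSup hbdd ⟨S, hf, hne, rfl⟩).trans hm.le
      rw [hdim] at hcomp
      rw [hm] at hlt
      exact absurd (hcomp.trans_lt hlt) (lt_irrefl _)
  · intro hsup
    have hle : orderDim P ≤ (n : Cardinal) := by
      refine orderDim_le_of_finite_subposets fun S hf hne => ?_
      exact (le_csSup hbdd ⟨S, hf, hne, rfl⟩).trans_eq hsup.symm
    rcases eq_or_lt_of_le hle with heq | hlt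
    · exact heq
    · exfalso
      have : sSup D ≤ orderDim P := csSup_le hDne hmono
      rw [← hsup] at this
      exact absurd (this.trans_lt hlt) (lt_irrefl _)
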